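/- Let α : H → G be a faithful functor of finite groupoids, x an object of G, g ∈ Hom_G(x,x), and ρ a representation of H with character χ. Then the character of the induced representation Ind_α(ρ) satisfies χ_ind(x,g) = Σ_{y ∈ Ob(H)} (1/|orbit_H(y)|)(1/|Aut_H(y)|) Σ_{s : x → α(y) in G, s g s⁻¹ ∈ α(Aut_H(y))} χ(y, α⁻¹(s g s⁻¹)), where the inner sum is over morphisms s of G from x to α(y) conjugating g into the image of Aut_H(y) under α. -/

import Mathlib

set_option linter.unusedSectionVars false
set_option maxHeartbeats 1000000

open CategoryTheory CategoryTheory.Limits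

namespace IndCharAux

lemma trace_pi_eq (k : Type) [Field k] {ι : Type} [Fintype ι] [DecidableEq ι]
    (N : ι → Type) [∀ i, AddCommGroup (N i)] [∀ i, Module k (N i)]
    [∀ i, FiniteDimensional k (N i)]
    (f : (∀ i, N i) →ₗ[k] (∀ i, N i)) :
    LinearMap.trace k (∀ i, N i) f
      = ∑ i, LinearMap.trace k (N i)
          ((LinearMap.proj i) ∘ₗ f ∘ₗ (LinearMap.single k N i)) := by
  classical
  let b : ∀ i, Module.Basis (Module.Free.ChooseBasisIndex k (N i)) k (N i) :=
    fun i => Module.Free.chooseBasis k (N i)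
  let B := Pi.basis b
  rw [LinearMap.trace_eq_matrix_trace k B f]
  have h2 : ∀ i, LinearMap.trace k (N i)
      ((LinearMap.proj i) ∘ₗ f ∘ₗ (LinearMap.single k N i))
      = Matrix.trace (LinearMap.toMatrix (b i) (b i)
          ((LinearMap.proj i) ∘ₗ f ∘ₗ (LinearMap.single k N i))) := fun i =>
    LinearMap.trace_eq_matrix_trace k (b i) _
  simp only [h2, Matrix.trace, Matrix.diag]
  rw [show (Finset.univ : Finset (Σ i, Module.Free.ChooseBasisIndex k (N i)))
      = Finset.univ.sigma (fun _ => Finset.univ) from rfl, Finset.sum_sigma]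
  refine Finset.sum_congr rfl (fun i _ => ?_)
  refine Finset.sum_congr rfl (fun j _ => ?_)
  simp [LinearMap.toMatrix_apply, B]


variable {H : Type} [Groupoid H] [Fintype H] [∀ x y : H, Fintype (x ⟶ y)]

/-- Precomposition with a morphism in a groupoid is an equivalence of hom-types. -/
@[simps] def precompEquiv {y y' z : H} (e : y ⟶ y') : (y' ⟶ z) ≃ (y ⟶ z) where
  toFun h := e ≫ h
  invFun h := Groupoid.inv e ≫ h
  left_inv h := by simp
  right_inv h := by simp

def cNum (y : H) : ℕ := ∑ y' : H, Fintype.card (y ⟶ y')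

lemma cNum_pos (y : H) : 0 < cNum y := by
  have h1 : 0 < Fintype.card (y ⟶ y) := Fintype.card_pos_iff.mpr ⟨𝟙 y⟩
  exact lt_of_lt_of_le h1 (Finset.single_le_sum (f := fun y' => Fintype.card (y ⟶ y'))
    (fun _ _ => Nat.zero_le _) (Finset.mem_univ y))

lemma cNum_eq_of_hom {y y' : H} (e : y ⟶ y') : cNum y = cNum y' := by
  unfold cNum
  refine Finset.sum_congr rfl (fun z _ => ?_)
  exact Fintype.card_congr (precompEquiv e).symm

lemma cNum_eq (y : H) :
    cNum y = Nat.card {z : H // Nonempty (z ≅ y)} * Nat.card (y ⟶ y) := by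
  classical
  have hcard : ∀ z : H, Fintype.card (y ⟶ z)
      = if Nonempty (z ≅ y) then Fintype.card (y ⟶ y) else 0 := by
    intro z
    by_cases h : Nonempty (z ≅ y)
    · rw [if_pos h]
      obtain ⟨e⟩ := h
      exact Fintype.card_congr (Iso.homCongr (Iso.refl y) e)
    · rw [if_neg h]
      rw [Fintype.card_eq_zero_iff]
      exact ⟨fun f => h ⟨((Groupoid.isoEquivHom y z).symm f).symm⟩⟩
  calc cNum y = ∑ z : H, if Nonempty (z ≅ y) then Fintype.card (y ⟶ y) else 0 :=
        Finset.sum_congr rfl fun z _ => hcard z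
    _ = ∑ z ∈ Finset.univ.filter (fun z => Nonempty (z ≅ y)), Fintype.card (y ⟶ y) :=
        (Finset.sum_filter _ _).symm
    _ = (Finset.univ.filter (fun z : H => Nonempty (z ≅ y))).card * Fintype.card (y ⟶ y) := by
        rw [Finset.sum_const, smul_eq_mul]
    _ = Nat.card {z : H // Nonempty (z ≅ y)} * Nat.card (y ⟶ y) := by
        rw [Nat.card_eq_fintype_card, Nat.card_eq_fintype_card, Fintype.card_subtype]

end IndCharAux

namespace Main

open IndCharAux

variable {k : Type} [Field k] [CharZero k]
  {H G : Type} [Groupoid H] [Groupoid G]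
  [Fintype H]
  [∀ x y : H, Fintype (x ⟶ y)] [∀ x y : G, Fintype (x ⟶ y)]
  [∀ a b : G, DecidableEq (a ⟶ b)]
  (α : H ⥤ G)
  (ρ : H ⥤ ModuleCat.{0} k) [∀ y : H, FiniteDimensional k (ρ.obj y)]
  (x : G)

abbrev Idx : Type := Σ y : H, (α.obj y ⟶ x)

abbrev Mty : Type := ∀ p : Idx α x, ρ.obj p.1

noncomputable def blockMap (j : CostructuredArrow α x) (p : Idx α x) :
    ρ.obj j.left →ₗ[k] ρ.obj p.1 :=
  ∑ h : j.left ⟶ p.1,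
    if α.map h ≫ p.2 = j.hom then (ρ.map h).hom else 0

noncomputable def mapIn (j : CostructuredArrow α x) : ρ.obj j.left →ₗ[k] Mty α ρ x :=
  ((cNum j.left : k))⁻¹ • LinearMap.pi (fun p => blockMap α ρ x j p)

lemma mapIn_natural {j j' : CostructuredArrow α x} (φ : j ⟶ j') :
    (mapIn α ρ x j') ∘ₗ (ρ.map φ.left).hom
      = mapIn α ρ x j := by
  have hc : cNum j.left = cNum j'.left := cNum_eq_of_hom φ.left
  unfold mapIn
  rw [LinearMap.smul_comp, hc]
  congr 1
  ext v p
  have hblock : (blockMap α ρ x j' p) ∘ₗ (ρ.map φ.left).hom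
      = blockMap α ρ x j p := by
    unfold blockMap
    ext w
    simp only [LinearMap.comp_apply, LinearMap.sum_apply]
    refine Fintype.sum_equiv (precompEquiv φ.left) _ _ (fun h' => ?_)
    have hcond : α.map (φ.left ≫ h') ≫ p.2 = j.hom ↔ α.map h' ≫ p.2 = j'.hom := by
      rw [α.map_comp, Category.assoc, ← CostructuredArrow.w φ]
      exact cancel_epi (α.map φ.left)
    have he : precompEquiv φ.left h' = φ.left ≫ h' := rfl
    rw [he]
    by_cases hcnd : α.map h' ≫ p.2 = j'.hom
    · rw [if_pos hcnd, if_pos (hcond.mpr hcnd), ρ.map_comp]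
      rfl
    · rw [if_neg hcnd, if_neg (fun hcc => hcnd (hcond.mp hcc))]
      rfl
  calc (LinearMap.pi fun p => blockMap α ρ x j' p).comp (ρ.map φ.left).hom v p
      = ((blockMap α ρ x j' p) ∘ₗ (ρ.map φ.left).hom) v := rfl
    _ = blockMap α ρ x j p v := by rw [hblock]

noncomputable def myCocone : Cocone (CostructuredArrow.proj α x ⋙ ρ) where
  pt := ModuleCat.of k (Mty α ρ x)
  ι :=
    { app := fun j => ModuleCat.ofHom (mapIn α ρ x j)
      naturality := fun j j' φ => by
        dsimp
        rw [Category.comp_id]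
        ext1
        exact mapIn_natural α ρ x φ }

noncomputable def outHom :
    Mty α ρ x →ₗ[k] (colimit (CostructuredArrow.proj α x ⋙ ρ) : ModuleCat k) :=
  ∑ p : Idx α x,
    (colimit.ι (CostructuredArrow.proj α x ⋙ ρ) (CostructuredArrow.mk p.2)).hom ∘ₗ LinearMap.proj p

lemma outHom_mapIn (j : CostructuredArrow α x) :
    (outHom α ρ x) ∘ₗ (mapIn α ρ x j)
      = (colimit.ι (CostructuredArrow.proj α x ⋙ ρ) j).hom := by
  ext v
  have key : ∀ (p : Idx α x) (h : j.left ⟶ p.1), α.map h ≫ p.2 = j.hom →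
      (colimit.ι (CostructuredArrow.proj α x ⋙ ρ) (CostructuredArrow.mk p.2)).hom ((ρ.map h).hom v)
      = (colimit.ι (CostructuredArrow.proj α x ⋙ ρ) j).hom v := by
    intro p h hcond
    have hw := colimit.w (CostructuredArrow.proj α x ⋙ ρ)
      (CostructuredArrow.homMk h hcond : j ⟶ CostructuredArrow.mk p.2)
    exact congrArg (fun f => ModuleCat.Hom.hom f v) hw
  have step1 : (outHom α ρ x) ((mapIn α ρ x j) v)
      = (cNum j.left : k)⁻¹ • ∑ p : Idx α x, ∑ h : j.left ⟶ p.1,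
          (if α.map h ≫ p.2 = j.hom
            then (colimit.ι (CostructuredArrow.proj α x ⋙ ρ) j).hom v
            else 0) := by
    unfold outHom mapIn blockMap
    simp only [LinearMap.sum_apply, LinearMap.comp_apply, LinearMap.proj_apply,
      LinearMap.smul_apply, Pi.smul_apply, LinearMap.pi_apply, map_smul, ← Finset.smul_sum]
    congr 1
    refine Finset.sum_congr rfl (fun p _ => ?_)
    show (colimit.ι (CostructuredArrow.proj α x ⋙ ρ) (CostructuredArrow.mk p.snd)).hom
        ((∑ h : j.left ⟶ p.fst, if α.map h ≫ p.snd = j.hom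
            then (ρ.map h).hom else 0) v) = _
    rw [LinearMap.sum_apply]
    refine (map_sum (colimit.ι (CostructuredArrow.proj α x ⋙ ρ) (CostructuredArrow.mk p.snd)).hom
      (fun h => (if α.map h ≫ p.snd = j.hom then (ρ.map h).hom else 0) v) Finset.univ).trans ?_
    refine Finset.sum_congr rfl (fun h _ => ?_)
    by_cases hcond : α.map h ≫ p.2 = j.hom
    · rw [if_pos hcond, if_pos hcond]
      exact key p h hcond
    · rw [if_neg hcond, if_neg hcond, LinearMap.zero_apply]
      exact map_zero _
  have step2 : ∑ p : Idx α x, ∑ h : j.left ⟶ p.1,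
      (if α.map h ≫ p.2 = j.hom
        then (colimit.ι (CostructuredArrow.proj α x ⋙ ρ) j).hom v
        else 0)
      = (cNum j.left) • ((colimit.ι (CostructuredArrow.proj α x ⋙ ρ) j).hom v) := by
    rw [show (Finset.univ : Finset (Idx α x))
        = Finset.univ.sigma (fun _ => Finset.univ) from rfl, Finset.sum_sigma]
    have inner : ∀ y' : H, ∑ f' : α.obj y' ⟶ x, ∑ h : j.left ⟶ y',
        (if α.map h ≫ f' = j.hom
          then (colimit.ι (CostructuredArrow.proj α x ⋙ ρ) j).hom v
          else 0)
        = (Fintype.card (j.left ⟶ y')) •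
            ((colimit.ι (CostructuredArrow.proj α x ⋙ ρ) j).hom v) := by
      intro y'
      rw [Finset.sum_comm]
      have hinner : ∀ h : j.left ⟶ y', (∑ f' : α.obj y' ⟶ x,
          if α.map h ≫ f' = j.hom
            then (colimit.ι (CostructuredArrow.proj α x ⋙ ρ) j).hom v
            else 0)
          = (colimit.ι (CostructuredArrow.proj α x ⋙ ρ) j).hom v := by
        intro h
        have hiff : ∀ f' : α.obj y' ⟶ x, (α.map h ≫ f' = j.hom)
            = (f' = Groupoid.inv (α.map h) ≫ j.hom) := by
          intro f'
          apply propext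
          constructor
          · intro hh; rw [← hh]; simp
          · intro hh; rw [hh]; simp
        simp only [hiff]
        exact Fintype.sum_ite_eq' (Groupoid.inv (α.map h) ≫ j.hom) _
      rw [Finset.sum_congr rfl (fun h _ => hinner h), Finset.sum_const, Finset.card_univ]
    calc ∑ y' : H, ∑ f' : α.obj y' ⟶ x, ∑ h : j.left ⟶ y',
        (if α.map h ≫ f' = j.hom
          then (colimit.ι (CostructuredArrow.proj α x ⋙ ρ) j).hom v
          else 0)
        = ∑ y' : H, (Fintype.card (j.left ⟶ y')) •
            ((colimit.ι (CostructuredArrow.proj α x ⋙ ρ) j).hom v) :=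
          Finset.sum_congr rfl (fun y' _ => inner y')
      _ = _ := by rw [← Finset.sum_smul]; rfl
  rw [LinearMap.comp_apply, step1, step2, ← Nat.cast_smul_eq_nsmul k, smul_smul,
    inv_mul_cancel₀ (Nat.cast_ne_zero.mpr (cNum_pos j.left).ne'), one_smul]
  rfl

noncomputable def descHom : (colimit (CostructuredArrow.proj α x ⋙ ρ) : ModuleCat k)
    →ₗ[k] Mty α ρ x :=
  (colimit.desc (CostructuredArrow.proj α x ⋙ ρ) (myCocone α ρ x)).hom

lemma descHom_ι (j : CostructuredArrow α x) :
    (descHom α ρ x) ∘ₗ (colimit.ι (CostructuredArrow.proj α x ⋙ ρ) j).hom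
      = mapIn α ρ x j := by
  have := colimit.ι_desc (myCocone α ρ x) j
  exact congrArg ModuleCat.Hom.hom this

lemma retraction :
    (outHom α ρ x) ∘ₗ (descHom α ρ x) = LinearMap.id := by
  have hm : (colimit.desc (CostructuredArrow.proj α x ⋙ ρ) (myCocone α ρ x))
      ≫ ModuleCat.ofHom (outHom α ρ x)
      = 𝟙 _ := by
    apply colimit.hom_ext
    intro j
    erw [colimit.ι_desc_assoc, Category.comp_id]
    ext1
    exact outHom_mapIn α ρ x j
  exact congrArg ModuleCat.Hom.hom hm

lemma ι_pointwiseMap (g : x ⟶ x) (j : CostructuredArrow α x) :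
    colimit.ι (CostructuredArrow.proj α x ⋙ ρ) j
        ≫ (Functor.pointwiseLeftKanExtension α ρ).map g
      = colimit.ι (CostructuredArrow.proj α x ⋙ ρ) ((CostructuredArrow.map g).obj j) := by
  simp [Functor.pointwiseLeftKanExtension]
  rfl

lemma outHom_single [DecidableEq (Idx α x)] (p : Idx α x) :
    (outHom α ρ x) ∘ₗ LinearMap.single k (fun q : Idx α x => (ρ.obj q.1 : Type)) p
      = (colimit.ι (CostructuredArrow.proj α x ⋙ ρ) (CostructuredArrow.mk p.2)).hom := by
  ext v
  unfold outHom
  simp only [LinearMap.comp_apply, LinearMap.sum_apply]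
  refine Finset.sum_eq_single p (fun q _ hq => ?_) (fun hp => absurd (Finset.mem_univ p) hp)
    |>.trans ?_
  · have h1 := LinearMap.congr_fun (LinearMap.proj_comp_single_ne k
      (fun q : Idx α x => (ρ.obj q.1 : Type)) q p hq) v
    have h2 : (LinearMap.proj (R := k) q) ((LinearMap.single k
        (fun q : Idx α x => (ρ.obj q.1 : Type)) p) v) = 0 := h1
    refine Eq.trans (congrArg (fun z => (colimit.ι (CostructuredArrow.proj α x ⋙ ρ)
      (CostructuredArrow.mk q.snd)).hom z) h2) (map_zero _)
  · have h1 := LinearMap.congr_fun (LinearMap.proj_comp_single_same k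
      (fun q : Idx α x => (ρ.obj q.1 : Type)) p) v
    have h2 : (LinearMap.proj (R := k) p) ((LinearMap.single k
        (fun q : Idx α x => (ρ.obj q.1 : Type)) p) v) = v := h1
    exact congrArg (fun z => (colimit.ι (CostructuredArrow.proj α x ⋙ ρ)
      (CostructuredArrow.mk p.snd)).hom z) h2

noncomputable def uMap (g : x ⟶ x) :
    (colimit (CostructuredArrow.proj α x ⋙ ρ) : ModuleCat k) →ₗ[k]
      (colimit (CostructuredArrow.proj α x ⋙ ρ) : ModuleCat k) :=
  ((Functor.pointwiseLeftKanExtension α ρ).map g).hom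

lemma trace_u (g : x ⟶ x) :
    LinearMap.trace k _ (uMap α ρ x g)
      = ∑ p : Idx α x, (cNum p.1 : k)⁻¹ *
          ∑ h : p.1 ⟶ p.1, if α.map h ≫ p.2 = p.2 ≫ g
            then LinearMap.trace k (ρ.obj p.1) (ρ.map h).hom else 0 := by
  classical
  have hsurj : Function.Surjective (outHom α ρ x) := fun c =>
    ⟨descHom α ρ x c, LinearMap.congr_fun (retraction α ρ x) c⟩
  haveI : Module.Finite k (colimit (CostructuredArrow.proj α x ⋙ ρ) : ModuleCat k) :=
    Module.Finite.of_surjective (outHom α ρ x) hsurj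
  have hu : uMap α ρ x g
      = ((uMap α ρ x g) ∘ₗ (outHom α ρ x)) ∘ₗ (descHom α ρ x) := by
    rw [LinearMap.comp_assoc, retraction α ρ x, LinearMap.comp_id]
  rw [hu, LinearMap.trace_comp_comm', trace_pi_eq k (fun p : Idx α x => (ρ.obj p.1 : Type))]
  refine Finset.sum_congr rfl (fun p _ => ?_)
  have hui : (uMap α ρ x g) ∘ₗ
      (colimit.ι (CostructuredArrow.proj α x ⋙ ρ) (CostructuredArrow.mk p.2)).hom
      = (colimit.ι (CostructuredArrow.proj α x ⋙ ρ)
          (CostructuredArrow.mk (p.2 ≫ g))).hom := by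
    exact congrArg ModuleCat.Hom.hom (ι_pointwiseMap α ρ x g (CostructuredArrow.mk p.2))
  have hblockmap : ((descHom α ρ x) ∘ₗ ((uMap α ρ x g) ∘ₗ (outHom α ρ x))) ∘ₗ
      LinearMap.single k (fun q : Idx α x => (ρ.obj q.1 : Type)) p
      = mapIn α ρ x (CostructuredArrow.mk (p.2 ≫ g)) := by
    rw [LinearMap.comp_assoc, LinearMap.comp_assoc, outHom_single α ρ x p]
    erw [hui]
    exact descHom_ι α ρ x (CostructuredArrow.mk (p.2 ≫ g))
  rw [hblockmap]
  have hproj : (LinearMap.proj (R := k) p) ∘ₗ mapIn α ρ x (CostructuredArrow.mk (p.2 ≫ g))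
      = (cNum p.1 : k)⁻¹ • blockMap α ρ x (CostructuredArrow.mk (p.2 ≫ g)) p := rfl
  rw [hproj, map_smul, smul_eq_mul]
  congr 1
  unfold blockMap
  rw [map_sum]
  refine Finset.sum_congr rfl (fun h _ => ?_)
  have hhom : (CostructuredArrow.mk (p.2 ≫ g)).hom = p.2 ≫ g := rfl
  simp only [hhom]
  by_cases hc : α.map h ≫ p.2 = p.2 ≫ g
  · rw [if_pos hc, if_pos hc]
  · rw [if_neg hc, if_neg hc, map_zero]

end Main

open IndCharAux Main in
/-- **Character of a representation induced along a faithful functor of finite groupoids.**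
Let `α : H ⥤ G` be a faithful functor of finite groupoids, `ρ` a finite-dimensional
representation of `H` over a field `k` of characteristic `0`, and let
`Ind_α ρ = k[G] ⊗_{k[H]} ρ` be the induced representation (realized as the left Kan
extension of `ρ` along `α`).  For an object `x` of `G` and `g ∈ Hom_G(x,x)`,
`χ_ind(x,g) = ∑_{y ∈ Ob H} |orbit_H(y)|⁻¹ |Aut_H(y)|⁻¹
  ∑_{s : x ⟶ α(y)} ∑_{h : y ⟶ y, α(h) = s g s⁻¹} χ(y, h)`,
the inner sum ranging (by faithfulness of `α`) over the unique preimage under `α` of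
`s g s⁻¹` in `Aut_H(y)`, whenever it exists. -/
theorem character_of_induced_groupoid_rep
    (k : Type) [Field k] [CharZero k]
    (H G : Type) [Groupoid H] [Groupoid G]
    [Fintype H] [Fintype G]
    [∀ x y : H, Fintype (x ⟶ y)] [∀ x y : G, Fintype (x ⟶ y)]
    [∀ a b : G, DecidableEq (a ⟶ b)]
    (α : H ⥤ G) [α.Faithful]
    (ρ : H ⥤ ModuleCat.{0} k) [∀ y : H, FiniteDimensional k (ρ.obj y)]
    (x : G) (g : x ⟶ x) :
    LinearMap.trace k ((α.lan.obj ρ).obj x) ((α.lan.obj ρ).map g).hom =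
      ∑ y : H,
        (Nat.card { z : H // Nonempty (z ≅ y) } : k)⁻¹ * (Nat.card (y ⟶ y) : k)⁻¹ *
          ∑ s : x ⟶ α.obj y, ∑ h : y ⟶ y,
            if α.map h = Groupoid.inv s ≫ g ≫ s then
              LinearMap.trace k (ρ.obj y) (ρ.map h).hom
            else 0 := by
  classical
  have hsurj : Function.Surjective (outHom α ρ x) := fun c =>
    ⟨descHom α ρ x c, LinearMap.congr_fun (retraction α ρ x) c⟩
  haveI : Module.Finite k (colimit (CostructuredArrow.proj α x ⋙ ρ) : ModuleCat k) :=
    Module.Finite.of_surjective (outHom α ρ x) hsurj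
  let e : α.lan.obj ρ ≅ Functor.pointwiseLeftKanExtension α ρ :=
    Functor.leftKanExtensionUnique _ (α.lanUnit.app ρ) _
      (Functor.pointwiseLeftKanExtensionUnit α ρ)
  have h1 : (α.lan.obj ρ).map g
      = (e.app x).symm.conj ((Functor.pointwiseLeftKanExtension α ρ).map g) := by
    rw [Iso.conj_apply, Iso.symm_inv, Iso.symm_hom,
      show (e.app x).hom = e.hom.app x from rfl,
      show (e.app x).inv = e.inv.app x from rfl,
      ← Category.assoc, ← e.hom.naturality g, Category.assoc,
      Iso.hom_inv_id_app, Category.comp_id]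
  have h2 : LinearMap.trace k ((α.lan.obj ρ).obj x) ((α.lan.obj ρ).map g).hom
      = LinearMap.trace k (colimit (CostructuredArrow.proj α x ⋙ ρ) : ModuleCat k)
          (uMap α ρ x g) := by
    rw [h1, ModuleCat.Iso.conj_eq_conj]
    exact LinearMap.trace_conj' _ _
  rw [h2, trace_u α ρ x g]
  -- reindex the sum
  rw [show (Finset.univ : Finset (Idx α x))
      = Finset.univ.sigma (fun _ => Finset.univ) from rfl, Finset.sum_sigma]
  refine Finset.sum_congr rfl (fun y _ => ?_)
  have hc : (cNum y : k)⁻¹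
      = (Nat.card { z : H // Nonempty (z ≅ y) } : k)⁻¹ * (Nat.card (y ⟶ y) : k)⁻¹ := by
    rw [cNum_eq y]
    push_cast
    rw [mul_inv]
  dsimp only
  rw [← Finset.mul_sum, hc]
  congr 1
  let invEquiv : (α.obj y ⟶ x) ≃ (x ⟶ α.obj y) :=
    { toFun := Groupoid.inv
      invFun := Groupoid.inv
      left_inv := fun f => by simp [Groupoid.inv_eq_inv]
      right_inv := fun f => by simp [Groupoid.inv_eq_inv] }
  refine Fintype.sum_equiv invEquiv _ _ (fun f => ?_)
  refine Finset.sum_congr rfl (fun h _ => ?_)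
  have hs : invEquiv f = Groupoid.inv f := rfl
  rw [hs]
  have hiff : (α.map h ≫ f = f ≫ g)
      ↔ (α.map h = Groupoid.inv (Groupoid.inv f) ≫ g ≫ Groupoid.inv f) := by
    simp only [Groupoid.inv_eq_inv, IsIso.inv_inv]
    constructor
    · intro hh
      rw [← Category.assoc, ← hh, Category.assoc, IsIso.hom_inv_id, Category.comp_id]
    · intro hh
      rw [hh]
      simp
  by_cases hcnd : α.map h ≫ f = f ≫ g
  · rw [if_pos hcnd, if_pos (hiff.mp hcnd)]
  · rw [if_neg hcnd, if_neg (fun hcc => hcnd (hiff.mpr hcc))]
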